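/- arXiv:2302.02163 — 3 statements merged into one kernel-verified Lean document; each statement's English description precedes it below -/
import Mathlib

section
/- After any run of the rank initializer ranking a set M of messages, the function rank_Msgs restricted to M is an injective map onto {1, ..., |M|}, and for every variable x with some ranked message, rank_Vars(x) = min { rank_Msgs(x, v) : (x, v) ∈ M }. -/
/-- The registers manipulated by the rank initializer: a rank for each
message `(x, v) ∈ Vars × Dom`, a rank for each variable, and the auxiliary
register `rank_nxt` holding the next rank to be assigned.  Rank `0` means
"unranked". -/
structure RankState (Vars Dom : Type) where
  rankM : Vars × Dom → ℕ
  rankV : Vars → ℕ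
  nxt : ℕ

/-- Initially all rank registers are `0` and `rank_nxt = 1`. -/
def RankState.initial (Vars Dom : Type) : RankState Vars Dom :=
  ⟨fun _ => 0, fun _ => 0, 1⟩

/-- One iteration of the rank initializer: pick an unranked message `m`,
assign it the current rank `rank_nxt`, assign `rank_nxt` also to the variable
of `m` if that variable is still unranked, and increment `rank_nxt`. -/
def RankStep {Vars Dom : Type} [DecidableEq Vars] [DecidableEq Dom]
    (s t : RankState Vars Dom) : Prop :=
  ∃ m : Vars × Dom, s.rankM m = 0 ∧
    t.rankM = Function.update s.rankM m s.nxt ∧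
    t.rankV = (if s.rankV m.1 = 0 then Function.update s.rankV m.1 s.nxt
               else s.rankV) ∧
    t.nxt = s.nxt + 1

structure RankInv {Vars Dom : Type} (s : RankState Vars Dom) : Prop where
  nxt_pos : 1 ≤ s.nxt
  rankM_lt : ∀ m, s.rankM m < s.nxt
  rankV_lt : ∀ x, s.rankV x < s.nxt
  inj : ∀ m m', s.rankM m ≠ 0 → s.rankM m = s.rankM m' → m = m'
  surj : ∀ n, 1 ≤ n → n < s.nxt → ∃ m, s.rankM m = n
  rankV_zero : ∀ x, s.rankV x = 0 ↔ ∀ v, s.rankM (x, v) = 0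
  rankV_le : ∀ x v, s.rankM (x, v) ≠ 0 → s.rankV x ≤ s.rankM (x, v)
  rankV_mem : ∀ x, s.rankV x ≠ 0 → ∃ v, s.rankM (x, v) = s.rankV x

theorem inv_step {Vars Dom : Type} [DecidableEq Vars] [DecidableEq Dom]
    {s t : RankState Vars Dom} (hs : RankInv s) (h : RankStep s t) : RankInv t := by
  obtain ⟨m, hm0, hM, hV, hn⟩ := h
  have hnx := hs.nxt_pos
  have hMne : ∀ a, a ≠ m → t.rankM a = s.rankM a := by
    intro a ha; rw [hM, Function.update_of_ne ha]
  have hMm : t.rankM m = s.nxt := by rw [hM, Function.update_self]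
  constructor
  · omega
  · intro a
    by_cases ha : a = m
    · subst ha; rw [hMm]; omega
    · rw [hMne a ha, hn]; exact lt_trans (hs.rankM_lt a) (by omega)
  · intro x
    rw [hV, hn]
    split
    · by_cases hx : x = m.1
      · subst hx; rw [Function.update_self]; omega
      · rw [Function.update_of_ne hx]; exact lt_trans (hs.rankV_lt x) (by omega)
    · exact lt_trans (hs.rankV_lt x) (by omega)
  · intro a b hane hab
    by_cases ha : a = m <;> by_cases hb : b = m
    · rw [ha, hb]
    · subst ha
      rw [hMm, hMne b hb] at hab
      exact absurd hab.symm (Nat.ne_of_lt (hs.rankM_lt b))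
    · subst hb
      rw [hMm, hMne a ha] at hab
      exact absurd hab (Nat.ne_of_lt (hs.rankM_lt a))
    · rw [hMne a ha, hMne b hb] at hab
      rw [hMne a ha] at hane
      exact hs.inj a b hane hab
  · intro n h1 h2
    rw [hn] at h2
    rcases Nat.lt_or_ge n s.nxt with hlt | hge
    · obtain ⟨a, ha⟩ := hs.surj n h1 hlt
      refine ⟨a, ?_⟩
      have : a ≠ m := by rintro rfl; omega
      rw [hMne a this]; exact ha
    · exact ⟨m, by rw [hMm]; omega⟩
  · intro x
    rw [hV]
    constructor
    · intro hx v
      split at hx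
      · rename_i h0
        by_cases hxm : x = m.1
        · subst hxm; rw [Function.update_self] at hx; omega
        · rw [Function.update_of_ne hxm] at hx
          have hvm : (x, v) ≠ m := fun hc => hxm (by rw [← hc])
          rw [hMne _ hvm]
          exact (hs.rankV_zero x).mp hx v
      · rename_i h0
        by_cases hvm : (x, v) = m
        · have hx1 : x = m.1 := congrArg Prod.fst hvm
          rw [hx1] at hx
          exact absurd hx h0
        · rw [hMne _ hvm]
          exact (hs.rankV_zero x).mp hx v
    · intro hall
      have hne : x ≠ m.1 := by
        intro hx
        have := hall m.2
        rw [hx, show (m.1, m.2) = m from rfl, hMm] at this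
        omega
      have hsall : ∀ v, s.rankM (x, v) = 0 := by
        intro v
        have := hall v
        rwa [hMne (x, v) (fun hc => hne (by rw [← hc]))] at this
      split
      · rw [Function.update_of_ne hne]
        exact (hs.rankV_zero x).mpr hsall
      · exact (hs.rankV_zero x).mpr hsall
  · intro x v hxv
    rw [hV]
    by_cases hvm : (x, v) = m
    · have hx1 : x = m.1 := congrArg Prod.fst hvm
      subst hx1
      rw [hvm, hMm]
      split
      · simp
      · have := hs.rankV_lt m.1; omega
    · rw [hMne _ hvm] at hxv ⊢
      have hle := hs.rankV_le x v hxv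
      split
      · rename_i h0
        by_cases hxm : x = m.1
        · exact absurd ((hs.rankV_zero x).mp (by rw [hxm]; exact h0) v) hxv
        · rw [Function.update_of_ne hxm]; exact hle
      · exact hle
  · intro x hx
    rw [hV] at hx ⊢
    split at hx <;> rename_i h0
    · rw [if_pos h0]
      by_cases hxm : x = m.1
      · subst hxm
        refine ⟨m.2, ?_⟩
        rw [show (m.1, m.2) = m from rfl, hMm, Function.update_self]
      · rw [Function.update_of_ne hxm] at hx ⊢
        obtain ⟨v, hv⟩ := hs.rankV_mem x hx
        refine ⟨v, ?_⟩
        rw [hMne (x, v) (fun hc => hxm (by rw [← hc])), hv]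
    · rw [if_neg h0]
      obtain ⟨v, hv⟩ := hs.rankV_mem x hx
      refine ⟨v, ?_⟩
      have hvm : (x, v) ≠ m := by
        intro hc
        have : s.rankM (x, v) = 0 := by rw [hc]; exact hm0
        rw [this] at hv; exact hx hv.symm
      rw [hMne _ hvm, hv]

theorem inv_run {Vars Dom : Type} [DecidableEq Vars] [DecidableEq Dom]
    {s : RankState Vars Dom}
    (h : Relation.ReflTransGen RankStep (RankState.initial Vars Dom) s) :
    RankInv s := by
  induction h with
  | refl =>
    refine ⟨le_refl 1, fun _ => Nat.zero_lt_one, fun _ => Nat.zero_lt_one,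
      fun m m' h _ => absurd rfl h,
      fun n h1 h2 => by simp only [RankState.initial] at h2; omega,
      fun x => ⟨fun _ _ => rfl, fun _ => rfl⟩,
      fun x v h => absurd rfl h, fun x h => absurd rfl h⟩
  | tail hrt hstep ih => exact inv_step ih hstep

/-- After any run of the rank initializer, let `M` be the set of ranked
messages.  Then `rank_Msgs` restricted to `M` is an injection onto
`{1, …, |M|}`, and for every variable `x` with some ranked message,
`rank_Vars(x)` is the minimum of the ranks of the ranked messages on `x`. -/
theorem rank_initializer_run_ranks
    {Vars Dom : Type} [Fintype Vars] [DecidableEq Vars]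
    [Fintype Dom] [DecidableEq Dom] (s : RankState Vars Dom)
    (h : Relation.ReflTransGen RankStep (RankState.initial Vars Dom) s)
    (M : Finset (Vars × Dom)) (hM : M = {m | s.rankM m ≠ 0}) :
    Set.BijOn s.rankM ↑M (Set.Icc 1 M.card) ∧
    ∀ x : Vars, (∃ v, (x, v) ∈ M) →
      s.rankV x = sInf {n | ∃ v, (x, v) ∈ M ∧ s.rankM (x, v) = n} := by
  have inv := inv_run h
  have hmem : ∀ m, m ∈ M ↔ s.rankM m ≠ 0 := by
    intro m; rw [← Finset.mem_coe, hM]; simp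
  have hcard : M.card = s.nxt - 1 := by
    rw [show s.nxt - 1 = (Finset.Icc 1 (s.nxt - 1)).card by
      rw [Nat.card_Icc]; omega]
    apply Finset.card_bij (fun m _ => s.rankM m)
    · intro a ha
      rw [hmem] at ha
      have := inv.rankM_lt a
      rw [Finset.mem_Icc]
      omega
    · intro a ha b hb hab
      exact inv.inj a b ((hmem a).mp ha) hab
    · intro n hn
      rw [Finset.mem_Icc] at hn
      obtain ⟨a, ha⟩ := inv.surj n hn.1 (by omega)
      exact ⟨a, (hmem a).mpr (by omega), ha⟩
  constructor
  · refine ⟨?_, ?_, ?_⟩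
    · intro a ha
      rw [Finset.mem_coe, hmem] at ha
      have := inv.rankM_lt a
      simp only [Set.mem_Icc, hcard]
      omega
    · intro a ha b hb hab
      rw [Finset.mem_coe, hmem] at ha
      exact inv.inj a b ha hab
    · intro n hn
      simp only [Set.mem_Icc, hcard] at hn
      obtain ⟨a, ha⟩ := inv.surj n hn.1 (by omega)
      exact ⟨a, by rw [Finset.mem_coe, hmem]; omega, ha⟩
  · rintro x ⟨v, hv⟩
    rw [hmem] at hv
    have hVx : s.rankV x ≠ 0 := by
      intro h0
      exact hv ((inv.rankV_zero x).mp h0 v)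
    obtain ⟨v0, hv0⟩ := inv.rankV_mem x hVx
    have hmemS : s.rankV x ∈ {n | ∃ v, (x, v) ∈ M ∧ s.rankM (x, v) = n} :=
      ⟨v0, (hmem _).mpr (by omega), hv0⟩
    refine le_antisymm (le_csInf ⟨_, hmemS⟩ ?_) (Nat.sInf_le hmemS)
    rintro n ⟨w, hw, rfl⟩
    exact inv.rankV_le x w ((hmem _).mp hw)
end

section
/- In the TSO simulation of a register machine, the verifier's check forces an unchanged memory: if in a run reaching q_final the verifier reads the initial value from every register-variable after the flag x_s is set, and the flag x_s is set only after the simulator reached q_target, then at the moment the verifier completes its checks, no write by any process to a register-variable has been propagated to shared memory before the verifier's corresponding read. -/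
/-- Process instructions: write a value to a shared variable or read a value
from it. -/
inductive PAct (X : Type) where
  | write (x : X) (v : ℕ) : PAct X
  | read (x : X) (v : ℕ) : PAct X

/-- A TSO configuration: shared memory, one FIFO store buffer per process,
and a local state per process. -/
structure TSOConf (P X Q : Type) where
  mem : X → ℕ
  buf : P → List (X × ℕ)
  st : P → Q

/-- Labels of TSO steps: a process performs an instruction, or the oldest
buffered write of a process is propagated to shared memory. -/
inductive TSOLbl (P X : Type) where
  | act (p : P) (a : PAct X) : TSOLbl P X
  | flush (p : P) (x : X) (v : ℕ) : TSOLbl P X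

/-- The most recent buffered write of a buffer on variable `x`, if any. -/
def bufVal {X : Type} [DecidableEq X] (buf : List (X × ℕ)) (x : X) : Option ℕ :=
  (buf.reverse.find? (fun q => decide (q.1 = x))).map Prod.snd

/-- TSO small-step semantics for a program `prog` (shared by all processes):
writes are appended to the writer's buffer; buffered writes are
nondeterministically propagated (in FIFO order) to shared memory; a read
returns the latest buffered write of the reading process on that variable if
one exists, otherwise the shared-memory value. -/
inductive TSOStep {P X Q : Type} [DecidableEq P] [DecidableEq X]
    (prog : Q → PAct X → Q → Prop) :
    TSOLbl P X → TSOConf P X Q → TSOConf P X Q → Prop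
  | write {c : TSOConf P X Q} {p x v q'} :
      prog (c.st p) (.write x v) q' →
      TSOStep prog (.act p (.write x v)) c
        ⟨c.mem, Function.update c.buf p (c.buf p ++ [(x, v)]),
          Function.update c.st p q'⟩
  | flush {c : TSOConf P X Q} {p x v rest} :
      c.buf p = (x, v) :: rest →
      TSOStep prog (.flush p x v) c
        ⟨Function.update c.mem x v, Function.update c.buf p rest, c.st⟩
  | read {c : TSOConf P X Q} {p x v q'} :
      prog (c.st p) (.read x v) q' →
      (bufVal (c.buf p) x = some v ∨
        (bufVal (c.buf p) x = none ∧ c.mem x = v)) →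
      TSOStep prog (.act p (.read x v)) c
        ⟨c.mem, c.buf, Function.update c.st p q'⟩

section Helpers
variable {P X Q : Type} [DecidableEq P] [DecidableEq X]
  {prog : Q → PAct X → Q → Prop}

lemma step_buf {lbl} {c c' : TSOConf P X Q} (h : TSOStep prog lbl c c')
    (p : P) (x : X) (v : ℕ) (hmem : (x, v) ∈ c'.buf p) :
    (x, v) ∈ c.buf p ∨ ∃ q q', prog q (.write x v) q' := by
  cases h with
  | write hp =>
      by_cases hpe : p = ‹P› <;> simp_all [Function.update]
      rcases hmem with h1 | ⟨h1, h2⟩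
      · tauto
      · subst h1 h2; exact Or.inr ⟨_, _, hp⟩
  | flush hb =>
      rename_i p' x' v' rest
      by_cases hpe : p = p'
      · subst hpe
        simp only [Function.update_self] at hmem
        left; rw [hb]; exact List.mem_cons_of_mem _ hmem
      · simp only [Function.update_of_ne hpe] at hmem
        exact Or.inl hmem
  | read hp hr => exact Or.inl hmem

lemma step_mem {lbl} {c c' : TSOConf P X Q} (h : TSOStep prog lbl c c')
    (x : X) : c'.mem x = c.mem x ∨ ∃ p, (x, c'.mem x) ∈ c.buf p := by
  cases h with
  | write hp => exact Or.inl rfl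
  | flush hb =>
      rename_i p x' v rest
      by_cases hxe : x = x'
      · subst hxe
        right; exact ⟨p, by simp [Function.update, hb]⟩
      · left; simp [Function.update, hxe]
  | read hp hr => exact Or.inl rfl

lemma flush_inv {p x v} {c c' : TSOConf P X Q}
    (h : TSOStep prog (.flush p x v) c c') :
    (∃ rest, c.buf p = (x, v) :: rest) ∧ c'.mem x = v := by
  cases h with
  | flush hb => exact ⟨⟨_, hb⟩, by simp [Function.update]⟩

lemma read_inv {p x v} {c c' : TSOConf P X Q}
    (h : TSOStep prog (.act p (.read x v)) c c')
    (hb : bufVal (c.buf p) x = none) : c.mem x = v := by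
  cases h with
  | read hp hr =>
      rcases hr with h1 | ⟨_, h2⟩
      · rw [hb] at h1; cases h1
      · exact h2

end Helpers

/-- The verifier's check forces an unchanged memory.  Consider a run of `n`
TSO steps from the all-zero initial configuration that reaches `q_final` in
the simulator process.  Suppose every program write to a register-variable
writes a non-initial (nonzero) value, the flag `x_s` is set only after the
simulator has reached `q_target`, and after `x_s` is set the verifier reads
the initial value `0` from each register-variable (from shared memory, its
buffer containing no write to that variable).  Then at the moment the
verifier completes its checks, no write by any process to a register-variable
has been propagated to shared memory before the verifier's corresponding
read. -/
theorem verifier_forces_unchanged_memory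
    {P X Q : Type} [DecidableEq P] [DecidableEq X]
    (prog : Q → PAct X → Q → Prop)
    (RegVar : X → Prop) (xs : X) (sim ver : P) (qtarget qfinal : Q)
    (n : ℕ) (c : ℕ → TSOConf P X Q) (l : ℕ → TSOLbl P X)
    (hrun : ∀ i < n, TSOStep prog (l i) (c i) (c (i + 1)))
    (hinit : (c 0).mem = (fun _ => 0) ∧ (c 0).buf = fun _ => [])
    (hfinal : (c n).st sim = qfinal)
    (hwrites : ∀ q x v q', prog q (.write x v) q' → RegVar x → v ≠ 0)
    (is : ℕ) (hs : ∃ p, l is = .flush p xs 1)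
    (htarget : ∃ j ≤ is, (c j).st sim = qtarget)
    (ix : X → ℕ)
    (hreads : ∀ x, RegVar x →
      is < ix x ∧ ix x < n ∧ l (ix x) = .act ver (.read x 0) ∧
      bufVal ((c (ix x)).buf ver) x = none) :
    ∀ x, RegVar x → ∀ j < ix x, ∀ p v, l j ≠ .flush p x v := by

  have bufInv : ∀ k ≤ n, ∀ p x v, (x, v) ∈ (c k).buf p → RegVar x → v ≠ 0 := by
    intro k
    induction k with
    | zero => intro _ p x v hmem; rw [hinit.2] at hmem; simp at hmem
    | succ k ih =>
        intro hk p x v hmem hr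
        rcases step_buf (hrun k (by omega)) p x v hmem with h | ⟨q, q', hp⟩
        · exact ih (by omega) p x v h hr
        · exact hwrites q x v q' hp hr
  intro x hrx j hj p v hl
  obtain ⟨h1, h2, h3, h4⟩ := hreads x hrx
  have hjn : j < n := by omega
  obtain ⟨⟨rest, hb⟩, hm⟩ := flush_inv (hl ▸ hrun j hjn)
  have hv : v ≠ 0 :=
    bufInv j (by omega) p x v (by rw [hb]; exact List.mem_cons_self) hrx
  have key : ∀ k, j + 1 ≤ k → k ≤ ix x → (c k).mem x ≠ 0 := by
    intro k
    induction k with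
    | zero => omega
    | succ k ih =>
        intro h5 h6
        rcases Nat.lt_or_ge (j + 1) (k + 1) with h7 | h7
        · have hkn : k < n := by omega
          rcases step_mem (hrun k hkn) x with h8 | ⟨p', h8⟩
          · rw [h8]; exact ih (by omega) (by omega)
          · exact bufInv k (by omega) p' x _ h8 hrx
        · have : k + 1 = j + 1 := by omega
          rw [this, hm]; exact hv
  have hmem0 : (c (ix x)).mem x = 0 := read_inv (h3 ▸ hrun (ix x) h2) h4
  exact key (ix x) (by omega) (le_refl _) hmem0
end

section
/- The read instruction simulation is sound: in the simulator register machine, a transition sequence implementing rd(x, d) from state q to q' can complete only if at its end either (i) lw(x) = d, or (ii) rank(x, d) < φ_P, φ_E ≥ φ_L(x), and φ_E ≥ rank(x, d), or (iii) d = d_init, lw(x) = 0, and rank_Vars(x) > φ_E. -/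
/-- The registers of the simulator register machine. -/
inductive Reg (Vars Dom : Type) where
  | lw (x : Vars) : Reg Vars Dom
  | rankVars (x : Vars) : Reg Vars Dom
  | phiL (x : Vars) : Reg Vars Dom
  | rankMsgs (m : Vars × Dom) : Reg Vars Dom
  | phiE : Reg Vars Dom
  | phiLmax : Reg Vars Dom
  | phiP : Reg Vars Dom
  | rankNxt : Reg Vars Dom
  deriving DecidableEq

/-- The control states of the gadget implementing `rd(x, d)`: `start = q`,
`done = q'`, intermediate states of path (b) and the auxiliary states raising
`φ_E`, and the intermediate state of path (c). -/
inductive GState where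
  | start | s1 | s2 | m1 | m2 | s3 | done
  deriving DecidableEq

/-- The simulator's implementation of the read instruction `rd(x, d)`, with
values encoded into `ℕ` by `enc` (and `0` denoting "no write yet"):
(a) a direct edge guarded by `lw(x) == d`;
(b) a path guarded by `rank(x, d) < φ_P` which then raises `φ_E` to at least
    `φ_L(x)` and then to at least `rank(x, d)` via `if φ_E < r then φ_E := r`;
(c) for `d = d_init` only, a path guarded by `lw(x) == 0` and
    `rank_Vars(x) > φ_E`. -/
inductive GStep {Vars Dom : Type} [DecidableEq Vars] [DecidableEq Dom]
    (x : Vars) (d dinit : Dom) (enc : Dom → ℕ) :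
    GState × (Reg Vars Dom → ℕ) → GState × (Reg Vars Dom → ℕ) → Prop
  | direct {ρ} : ρ (.lw x) = enc d →
      GStep x d dinit enc (.start, ρ) (.done, ρ)
  | guardP {ρ} : ρ (.rankMsgs (x, d)) < ρ .phiP →
      GStep x d dinit enc (.start, ρ) (.s1, ρ)
  | geL {ρ} : ρ .phiE ≥ ρ (.phiL x) →
      GStep x d dinit enc (.s1, ρ) (.s2, ρ)
  | ltL {ρ} : ρ .phiE < ρ (.phiL x) →
      GStep x d dinit enc (.s1, ρ) (.m1, ρ)
  | raiseL {ρ} :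
      GStep x d dinit enc (.m1, ρ) (.s2, Function.update ρ .phiE (ρ (.phiL x)))
  | geR {ρ} : ρ .phiE ≥ ρ (.rankMsgs (x, d)) →
      GStep x d dinit enc (.s2, ρ) (.done, ρ)
  | ltR {ρ} : ρ .phiE < ρ (.rankMsgs (x, d)) →
      GStep x d dinit enc (.s2, ρ) (.m2, ρ)
  | raiseR {ρ} :
      GStep x d dinit enc
        (.m2, ρ) (.done, Function.update ρ .phiE (ρ (.rankMsgs (x, d))))
  | initGuard {ρ} : d = dinit → ρ (.lw x) = 0 →
      GStep x d dinit enc (.start, ρ) (.s3, ρ)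
  | initRead {ρ} : d = dinit → ρ (.rankVars x) > ρ .phiE →
      GStep x d dinit enc (.s3, ρ) (.done, ρ)

def GInv {Vars Dom : Type} (x : Vars) (d dinit : Dom) (enc : Dom → ℕ) :
    GState → (Reg Vars Dom → ℕ) → Prop
  | .start, _ => True
  | .s1, ρ => ρ (.rankMsgs (x, d)) < ρ .phiP
  | .m1, ρ => ρ (.rankMsgs (x, d)) < ρ .phiP ∧ ρ .phiE < ρ (.phiL x)
  | .s2, ρ => ρ (.rankMsgs (x, d)) < ρ .phiP ∧ ρ .phiE ≥ ρ (.phiL x)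
  | .m2, ρ => ρ (.rankMsgs (x, d)) < ρ .phiP ∧ ρ .phiE ≥ ρ (.phiL x) ∧
      ρ .phiE < ρ (.rankMsgs (x, d))
  | .s3, ρ => d = dinit ∧ ρ (.lw x) = 0
  | .done, ρ =>
      ρ (.lw x) = enc d ∨
      (ρ (.rankMsgs (x, d)) < ρ .phiP ∧ ρ .phiE ≥ ρ (.phiL x) ∧
        ρ .phiE ≥ ρ (.rankMsgs (x, d))) ∨
      (d = dinit ∧ ρ (.lw x) = 0 ∧ ρ (.rankVars x) > ρ .phiE)

theorem ginv_reach {Vars Dom : Type} [DecidableEq Vars] [DecidableEq Dom]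
    (x : Vars) (d dinit : Dom) (enc : Dom → ℕ)
    (ρ : Reg Vars Dom → ℕ) (p : GState × (Reg Vars Dom → ℕ))
    (h : Relation.ReflTransGen (GStep x d dinit enc) (.start, ρ) p) :
    GInv x d dinit enc p.1 p.2 := by
  induction h with
  | refl => trivial
  | tail _ hstep ih =>
    cases hstep with
    | direct h => exact Or.inl h
    | guardP h => exact h
    | geL h => exact ⟨ih, h⟩
    | ltL h => exact ⟨ih, h⟩
    | raiseL =>
      obtain ⟨h1, h2⟩ := ih
      simp only [GInv] at *
      simp [Function.update_apply]
      omega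
    | geR h => exact Or.inr (Or.inl ⟨ih.1, ih.2, h⟩)
    | ltR h => exact ⟨ih.1, ih.2, h⟩
    | raiseR =>
      obtain ⟨h1, h2, h3⟩ := ih
      refine Or.inr (Or.inl ?_)
      simp only [GInv] at *
      simp [Function.update_apply]
      omega
    | initGuard h1 h2 => exact ⟨h1, h2⟩
    | initRead h1 h2 => exact Or.inr (Or.inr ⟨ih.1, ih.2, h2⟩)

/-- Soundness of the read-instruction simulation: a transition sequence
implementing `rd(x, d)` from `q` to `q'` can complete only if at its end
(i) `lw(x) = d`, or (ii) `rank(x, d) < φ_P`, `φ_E ≥ φ_L(x)` and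
`φ_E ≥ rank(x, d)`, or (iii) `d = d_init`, `lw(x) = 0` and
`rank_Vars(x) > φ_E`. -/
theorem read_simulation_sound {Vars Dom : Type}
    [DecidableEq Vars] [DecidableEq Dom]
    (x : Vars) (d dinit : Dom) (enc : Dom → ℕ)
    (hinj : Function.Injective enc) (hpos : ∀ v, enc v ≠ 0)
    (ρ ρ' : Reg Vars Dom → ℕ)
    (h : Relation.ReflTransGen (GStep x d dinit enc) (.start, ρ) (.done, ρ')) :
    ρ' (.lw x) = enc d ∨
    (ρ' (.rankMsgs (x, d)) < ρ' .phiP ∧ ρ' .phiE ≥ ρ' (.phiL x) ∧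
      ρ' .phiE ≥ ρ' (.rankMsgs (x, d))) ∨
    (d = dinit ∧ ρ' (.lw x) = 0 ∧ ρ' (.rankVars x) > ρ' .phiE) := by
  exact ginv_reach x d dinit enc ρ (.done, ρ') h
end
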